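/- arXiv:2010.02483 — 4 statements merged into one kernel-verified Lean document; each statement's English description precedes it below -/
import Mathlib

section
/- For a polynomial action (T_h)_{h≥0}, the family T_h^{(n)} := Π_n T_h|_{M_n} is a semigroup of linear operators on M_n, i.e. T_0^{(n)} = I and T_h^{(n)} T_k^{(n)} = T_{h+k}^{(n)} for all h, k ≥ 0. -/
/-- For a polynomial action `T`, the family
`T^{(n)}_h := Pr n ∘ T h` restricted to `M_n = range (Pr n)` is a semigroup of
linear operators on `M_n`: `T^{(n)}_0 = I` and `T^{(n)}_h T^{(n)}_k = T^{(n)}_{h+k}`. -/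
theorem stmt3 {𝕜 V : Type*} [Field 𝕜] [AddCommGroup V] [Module 𝕜 V]
    (deg : V → ℕ)
    (T : ℝ → Module.End 𝕜 V)
    (Pr : ℕ → Module.End 𝕜 V)
    (hTdeg : ∀ h : ℝ, 0 ≤ h → ∀ p, deg (T h p) ≤ deg p)
    (hT0 : T 0 = 1)
    (hTsem : ∀ h k : ℝ, 0 ≤ h → 0 ≤ k → T h * T k = T (h + k))
    (hPrrange : ∀ n p, deg (Pr n p) ≤ n)
    (hPrker : ∀ (n : ℕ) (p : V), deg p ≤ n → ∀ l, n < l → Pr l p = 0)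
    (hPridem : ∀ n, Pr n * Pr n = Pr n)
    (hProrth : ∀ l n : ℕ, l ≠ n → Pr l * Pr n = 0)
    (hsum : ∀ p, p = ∑ n ∈ Finset.range (deg p + 1), Pr n p) :
    ∀ n : ℕ, ∀ f : V, Pr n f = f →
      Pr n (T 0 f) = f ∧
      ∀ h k : ℝ, 0 ≤ h → 0 ≤ k →
        Pr n (T h (Pr n (T k f))) = Pr n (T (h + k) f) := by
  intro n f hf
  constructor
  · rw [hT0]; simpa using hf
  · intro h k hh hk
    have hdegf : deg f ≤ n := hf ▸ hPrrange n f
    -- key lemma: for g with deg g ≤ n, Pr n (T h (Pr n g)) = Pr n (T h g)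
    have key : ∀ g : V, deg g ≤ n → Pr n (T h (Pr n g)) = Pr n (T h g) := by
      intro g hg
      have hdecomp := hsum g
      have hPrTg : Pr n (T h g) =
          ∑ m ∈ Finset.range (deg g + 1), Pr n (T h (Pr m g)) := by
        conv_lhs => rw [hdecomp]
        simp [map_sum]
      have hvanish : ∀ m ∈ Finset.range (deg g + 1), m ≠ n →
          Pr n (T h (Pr m g)) = 0 := by
        intro m hm hmn
        have hmlt : m < n := lt_of_le_of_ne (le_trans (Nat.lt_succ_iff.mp
          (Finset.mem_range.mp hm)) hg) hmn
        exact hPrker m _ (le_trans (hTdeg h hh _) (hPrrange m g)) n hmlt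
      rcases lt_or_ge (deg g) n with hlt | hle
      · -- n not in range: both sides zero
        have h1 : Pr n g = 0 := hPrker (deg g) g le_rfl n hlt
        have h2 : Pr n (T h g) = 0 := by
          rw [hPrTg]
          refine Finset.sum_eq_zero ?_
          intro m hm
          exact hvanish m hm (by have := Finset.mem_range.mp hm; omega)
        rw [h1, h2, map_zero, map_zero]
      · have hn : n = deg g := le_antisymm hle hg
        rw [hPrTg, Finset.sum_eq_single n]
        · intro m hm hmn; exact hvanish m hm hmn
        · intro hmem; exact absurd (Finset.mem_range.mpr (by omega)) hmem
    have hdegTk : deg (T k f) ≤ n := le_trans (hTdeg k hk f) hdegf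
    rw [key _ hdegTk]
    have : T h (T k f) = T (h + k) f := by
      have := hTsem h k hh hk
      calc T h (T k f) = (T h * T k) f := rfl
        _ = T (h + k) f := by rw [this]
    rw [this]
end

section
/- If T is a locally finite polynomial action, then for every p ∈ P the space P_p^0 := ⋃_{l∈ℕ} Span{T_{2^{-l}}^k p : k ∈ ℕ} is a finite-dimensional subspace of P containing p which is T_h-invariant for every dyadic rational h ≥ 0. -/
open Submodule Set Module

lemma orbit_aux {𝕜 V : Type*} [Field 𝕜] [AddCommGroup V] [Module 𝕜 V]
    (g : Module.End 𝕜 V) (q : V) (n : ℕ)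
    (hdep : ¬ LinearIndependent 𝕜 (fun k : Fin (n + 1) => (g ^ (k : ℕ)) q)) :
    ∃ m : ℕ, m ≤ n ∧ Submodule.span 𝕜 (Set.range fun k : ℕ => (g ^ k) q) =
      Submodule.span 𝕜 ((fun k : ℕ => (g ^ k) q) '' Set.Iio m) := by
  classical
  set f : ℕ → V := fun k => (g ^ k) q with hf
  rw [Fintype.not_linearIndependent_iff] at hdep
  obtain ⟨c, hsum, i, hi⟩ := hdep
  set s : Finset (Fin (n + 1)) := Finset.univ.filter (fun j => c j ≠ 0) with hs
  have hsne : s.Nonempty := ⟨i, by simp [hs, hi]⟩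
  set m' : Fin (n + 1) := s.max' hsne with hm'
  have hcm' : c m' ≠ 0 := by
    have := s.max'_mem hsne
    simp only [hs, Finset.mem_filter] at this
    exact this.2
  set U : Submodule 𝕜 V := Submodule.span 𝕜 (f '' Set.Iio (m' : ℕ)) with hU
  have hterm : ∀ j ∈ Finset.univ.erase m', c j • f (j : ℕ) ∈ U := by
    intro j hj
    by_cases hcj : c j = 0
    · simp [hcj]
    · have hjs : j ∈ s := by simp [hs, hcj]
      have hle : j ≤ m' := s.le_max' j hjs
      have hne : j ≠ m' := (Finset.mem_erase.1 hj).1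
      have hlt : (j : ℕ) < (m' : ℕ) := by
        refine lt_of_le_of_ne ?_ ?_
        · exact_mod_cast hle
        · intro hh; exact hne (Fin.ext hh)
      exact U.smul_mem _ (Submodule.subset_span ⟨j, hlt, rfl⟩)
  have hfm : f (m' : ℕ) ∈ U := by
    have h1 : c m' • f (m' : ℕ) + ∑ j ∈ Finset.univ.erase m', c j • f (j : ℕ) = 0 := by
      rw [Finset.add_sum_erase Finset.univ (fun j => c j • f (j : ℕ)) (Finset.mem_univ m')]
      exact hsum
    have h2 : c m' • f (m' : ℕ) = -∑ j ∈ Finset.univ.erase m', c j • f (j : ℕ) :=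
      eq_neg_of_add_eq_zero_left h1
    have h3 : c m' • f (m' : ℕ) ∈ U := by
      rw [h2]
      exact U.neg_mem (Submodule.sum_mem _ hterm)
    have := U.smul_mem (c m')⁻¹ h3
    rwa [inv_smul_smul₀ hcm'] at this
  have hgU : ∀ x ∈ U, g x ∈ U := by
    have hmap : Submodule.map g U ≤ U := by
      rw [hU, Submodule.map_span, Submodule.span_le]
      rintro _ ⟨_, ⟨j, hj, rfl⟩, rfl⟩
      have hgf : g (f j) = f (j + 1) := by
        simp only [hf]
        rw [pow_succ']
        rfl
      rw [hgf]
      rcases lt_or_eq_of_le (Nat.succ_le_of_lt hj) with h | h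
      · exact Submodule.subset_span ⟨j + 1, h, rfl⟩
      · rw [show j + 1 = (m' : ℕ) from h]; exact hfm
    intro x hx
    exact hmap ⟨x, hx, rfl⟩
  have hall : ∀ k, f k ∈ U := by
    intro k
    induction k with
    | zero =>
        rcases Nat.eq_zero_or_pos (m' : ℕ) with h | h
        · have := hfm; rwa [h] at this
        · exact Submodule.subset_span ⟨0, h, rfl⟩
    | succ k ih =>
        have hgf : f (k + 1) = g (f k) := by
          simp only [hf]
          rw [pow_succ']
          rfl
        rw [hgf]
        exact hgU _ ih
  refine ⟨(m' : ℕ), by omega, le_antisymm ?_ ?_⟩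
  · rw [Submodule.span_le]
    rintro _ ⟨k, rfl⟩
    exact hall k
  · exact Submodule.span_mono (Set.image_subset_range _ _)



set_option maxHeartbeats 1000000 in
/-- For a locally finite polynomial action `T`, the space
`P_p^0 = ⋃_l Span{T_{2^{-l}}^k p : k ∈ ℕ}` is a finite-dimensional subspace
containing `p` which is `T_h`-invariant for every dyadic rational `h ≥ 0`. -/
theorem stmt7 {𝕜 V : Type*} [Field 𝕜] [AddCommGroup V] [Module 𝕜 V]
    (deg : V → ℕ)
    (T : ℝ → Module.End 𝕜 V)
    (hTdeg : ∀ h : ℝ, 0 ≤ h → ∀ p, deg (T h p) ≤ deg p)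
    (hT0 : T 0 = 1)
    (hTsem : ∀ h k : ℝ, 0 ≤ h → 0 ≤ k → T h * T k = T (h + k))
    (hlf : ∀ q : V, ∃ n : ℕ, ∀ h : ℝ, 0 < h →
      ¬ LinearIndependent 𝕜 (fun k : Fin (n + 1) => ((T h) ^ (k : ℕ)) q))
    (p : V) :
    ∀ S : Submodule 𝕜 V,
      S = (⨆ l : ℕ, Submodule.span 𝕜
            (Set.range fun k : ℕ => ((T (((2 : ℝ) ^ l)⁻¹)) ^ k) p)) →
      p ∈ S ∧ FiniteDimensional 𝕜 S ∧
      ∀ h : ℝ, 0 ≤ h → (∃ a l : ℕ, h = (a : ℝ) * ((2 : ℝ) ^ l)⁻¹) →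
        ∀ q ∈ S, T h q ∈ S := by
  intro S hS
  classical
  set W : ℕ → Submodule 𝕜 V := fun l => Submodule.span 𝕜
      (Set.range fun k : ℕ => ((T (((2 : ℝ) ^ l)⁻¹)) ^ k) p) with hW
  -- powers of T
  have hTpow : ∀ h : ℝ, 0 ≤ h → ∀ a : ℕ, T ((a : ℝ) * h) = (T h) ^ a := by
    intro h h0 a
    induction a with
    | zero => simpa using hT0
    | succ a ih =>
        have hcast : ((a + 1 : ℕ) : ℝ) * h = h + (a : ℝ) * h := by push_cast; ring
        rw [hcast, ← hTsem h ((a : ℝ) * h) h0 (by positivity), ih, pow_succ']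
  have key : ∀ m l : ℕ, m ≤ l →
      T (((2 : ℝ) ^ m)⁻¹) = (T (((2 : ℝ) ^ l)⁻¹)) ^ (2 ^ (l - m)) := by
    intro m l hml
    have h2 : ((2 ^ (l - m) : ℕ) : ℝ) * ((2 : ℝ) ^ l)⁻¹ = ((2 : ℝ) ^ m)⁻¹ := by
      have hl : (2 : ℝ) ^ l = 2 ^ (l - m) * 2 ^ m := by
        rw [← pow_add]; congr 1; omega
      push_cast
      rw [hl, mul_inv, ← mul_assoc, mul_inv_cancel₀ (by positivity), one_mul]
    rw [← h2, hTpow _ (by positivity)]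
  -- monotonicity
  have hWmono : Monotone W := by
    apply monotone_nat_of_le_succ
    intro l
    rw [hW, Submodule.span_le]
    rintro _ ⟨k, rfl⟩
    have hk : ((T (((2 : ℝ) ^ l)⁻¹)) ^ k) p
        = ((T (((2 : ℝ) ^ (l + 1))⁻¹)) ^ (2 ^ (l + 1 - l) * k)) p := by
      rw [key l (l + 1) (by omega), ← pow_mul]
    show ((T (((2 : ℝ) ^ l)⁻¹)) ^ k) p ∈ (W (l + 1) : Set V)
    rw [hk]
    exact Submodule.subset_span ⟨2 ^ (l + 1 - l) * k, rfl⟩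
  have hdir : Directed (· ≤ ·) W := hWmono.directed_le
  -- invariance of each W L under T (2^L)⁻¹ and its powers
  have hWinv : ∀ L : ℕ, ∀ x ∈ W L, (T (((2 : ℝ) ^ L)⁻¹)) x ∈ W L := by
    intro L
    have hmap : Submodule.map (T (((2 : ℝ) ^ L)⁻¹)) (W L) ≤ W L := by
      rw [hW, Submodule.map_span, Submodule.span_le]
      rintro _ ⟨_, ⟨k, rfl⟩, rfl⟩
      have : (T (((2 : ℝ) ^ L)⁻¹)) (((T (((2 : ℝ) ^ L)⁻¹)) ^ k) p)
          = ((T (((2 : ℝ) ^ L)⁻¹)) ^ (k + 1)) p := by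
        rw [pow_succ']; rfl
      rw [this]
      exact Submodule.subset_span ⟨k + 1, rfl⟩
    intro x hx
    exact hmap ⟨x, hx, rfl⟩
  have hWpowinv : ∀ L a : ℕ, ∀ x ∈ W L, ((T (((2 : ℝ) ^ L)⁻¹)) ^ a) x ∈ W L := by
    intro L a
    induction a with
    | zero => intro x hx; simpa using hx
    | succ a ih =>
        intro x hx
        have : ((T (((2 : ℝ) ^ L)⁻¹)) ^ (a + 1)) x
            = (T (((2 : ℝ) ^ L)⁻¹)) (((T (((2 : ℝ) ^ L)⁻¹)) ^ a) x) := by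
          rw [pow_succ']; rfl
        rw [this]
        exact hWinv L _ (ih x hx)
  -- uniform dimension bound
  obtain ⟨n, hn⟩ := hlf p
  have hWfd : ∀ l : ℕ, FiniteDimensional 𝕜 (W l) ∧ finrank 𝕜 (W l) ≤ n := by
    intro l
    have hpos : (0 : ℝ) < ((2 : ℝ) ^ l)⁻¹ := by positivity
    obtain ⟨m, hmn, hspan⟩ := orbit_aux (T (((2 : ℝ) ^ l)⁻¹)) p n (hn _ hpos)
    set f : ℕ → V := fun k => ((T (((2 : ℝ) ^ l)⁻¹)) ^ k) p with hf
    have hset : f '' Set.Iio m = Set.range (fun i : Fin m => f (i : ℕ)) := by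
      ext x
      constructor
      · rintro ⟨k, hk, rfl⟩
        exact ⟨⟨k, hk⟩, rfl⟩
      · rintro ⟨i, rfl⟩
        exact ⟨(i : ℕ), i.2, rfl⟩
    have hWl : W l = Submodule.span 𝕜 (Set.range (fun i : Fin m => f (i : ℕ))) := by
      show Submodule.span 𝕜 (Set.range f) = _
      rw [hspan, hset]
    constructor
    · rw [hWl]
      exact FiniteDimensional.span_of_finite 𝕜 (Set.finite_range _)
    · rw [hWl]
      refine le_trans ?_ hmn
      have := finrank_range_le_card (R := 𝕜) (fun i : Fin m => f (i : ℕ))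
      simpa [Set.finrank] using this
  haveI : ∀ l, FiniteDimensional 𝕜 (W l) := fun l => (hWfd l).1
  -- stabilization
  set r : ℕ → ℕ := fun l => finrank 𝕜 (W l) with hr
  have hbdd : BddAbove (Set.range r) := ⟨n, by rintro _ ⟨l, rfl⟩; exact (hWfd l).2⟩
  have hmem : sSup (Set.range r) ∈ Set.range r :=
    Nat.sSup_mem ⟨r 0, ⟨0, rfl⟩⟩ hbdd
  obtain ⟨L, hL⟩ := hmem
  have hLmax : ∀ l, r l ≤ r L := by
    intro l
    rw [hL]
    exact le_csSup hbdd ⟨l, rfl⟩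
  have hstab : ∀ l, W l ≤ W L := by
    intro l
    rcases le_total l L with h | h
    · exact hWmono h
    · have hle : W L ≤ W l := hWmono h
      have := Submodule.eq_of_le_of_finrank_le hle (hLmax l)
      rw [this]
  have hSW : S = W L := by
    rw [hS]
    refine le_antisymm (iSup_le hstab) (le_iSup W L)
  refine ⟨?_, ?_, ?_⟩
  · rw [hS]
    have : p ∈ W 0 := Submodule.subset_span ⟨0, by simp⟩
    exact (le_iSup W 0) this
  · rw [hSW]; infer_instance
  · rintro h h0 ⟨a, l, rfl⟩ q hq
    rw [hS] at hq ⊢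
    obtain ⟨m, hm⟩ := (Submodule.mem_iSup_of_directed W hdir).1 hq
    set M := max l m with hM
    have hqM : q ∈ W M := hWmono (le_max_right l m) hm
    have hTh : T ((a : ℝ) * ((2 : ℝ) ^ l)⁻¹)
        = (T (((2 : ℝ) ^ M)⁻¹)) ^ (2 ^ (M - l) * a) := by
      rw [hTpow _ (by positivity) a, key l M (le_max_left l m), ← pow_mul,
        Nat.mul_comm]
    rw [hTh]
    exact (le_iSup W M) (hWpowinv M _ q hqM)
end

section
/- If T is a strongly reducing polynomial action, then all the eigenvalues λ_n from the reducing characterization are zero, deg(T_h p − p) < deg(p) for all p ∈ P \ P₀, and the exponential series terminates: T_h p = Σ_{k=0}^n (h^k / k!) G^k p for all p ∈ P_n and h ≥ 0. -/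
open Filter

lemma stmt13_exp_aux {𝕜 : Type*} [RCLike 𝕜] (l : 𝕜)
    (h1 : ∀ h : ℝ, 0 ≤ h → NormedSpace.exp (algebraMap ℝ 𝕜 h * l) = 1) : l = 0 := by
  have key : ∀ t : ℝ, 0 ≤ t → NormedSpace.exp (t • l) = 1 := by
    intro t ht
    rw [Algebra.smul_def]
    exact h1 t ht
  have h2 : (fun u : ℝ => NormedSpace.exp (u • l)) =ᶠ[nhds (1:ℝ)] (fun _ => 1) := by
    filter_upwards [Ioi_mem_nhds (by norm_num : (0:ℝ) < 1)] with t ht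
    exact key t (le_of_lt ht)
  have hd2 : HasDerivAt (fun u : ℝ => NormedSpace.exp (u • l)) 0 1 :=
    (hasDerivAt_const (1:ℝ) (1:𝕜)).congr_of_eventuallyEq h2
  have h3 := hd2.unique (hasDerivAt_exp_smul_const l (1:ℝ))
  rw [show NormedSpace.exp ((1:ℝ) • l) = 1 from key 1 zero_le_one, one_mul] at h3
  exact h3.symm

lemma stmt13_polyeq {𝕜 : Type*} [RCLike 𝕜] (P Q : Polynomial 𝕜)
    (h : ∀ m : ℕ, P.eval (m : 𝕜) = Q.eval (m : 𝕜)) : P = Q := by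
  have h0 : P - Q = 0 := by
    apply Polynomial.eq_zero_of_infinite_isRoot
    apply Set.Infinite.mono (s := Set.range (fun m : ℕ => (m : 𝕜)))
    · rintro x ⟨m, rfl⟩
      simp [Polynomial.IsRoot, h m]
    · exact Set.infinite_range_of_injective Nat.cast_injective
  exact sub_eq_zero.mp h0

lemma stmt13_coeffs {𝕜 : Type*} [RCLike 𝕜] (N : ℕ) (b : ℕ → 𝕜)
    (h : ∀ m : ℕ, ∑ j ∈ Finset.range N, b j * (m : 𝕜) ^ j = 0) :
    ∀ j, j < N → b j = 0 := by
  intro j hj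
  have hP : (∑ i ∈ Finset.range N, Polynomial.C (b i) * Polynomial.X ^ i) = (0 : Polynomial 𝕜) := by
    apply stmt13_polyeq
    intro m
    simp only [Polynomial.eval_finset_sum, Polynomial.eval_mul, Polynomial.eval_C,
      Polynomial.eval_pow, Polynomial.eval_X, Polynomial.eval_zero]
    exact h m
  have := congrArg (fun P : Polynomial 𝕜 => P.coeff j) hP
  simpa [Polynomial.finset_sum_coeff, Polynomial.coeff_C_mul, Polynomial.coeff_X_pow,
    Finset.sum_ite_eq', hj] using this

lemma stmt13_descfac {𝕜 : Type*} [RCLike 𝕜] (m k : ℕ) :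
    ∏ i ∈ Finset.range k, ((m : 𝕜) - (i : 𝕜)) = (Nat.factorial k : 𝕜) * (m.choose k : 𝕜) := by
  induction k with
  | zero => simp
  | succ k ih =>
    rw [Finset.prod_range_succ, ih]
    by_cases hk : k ≤ m
    · rw [show (m : 𝕜) - (k : 𝕜) = ((m - k : ℕ) : 𝕜) from by push_cast [hk]; ring]
      rw [mul_assoc, ← Nat.cast_mul, ← Nat.choose_succ_right_eq, Nat.cast_mul,
        Nat.factorial_succ]
      push_cast
      ring
    · have hm : m < k := Nat.lt_of_not_le hk
      simp [Nat.choose_eq_zero_of_lt hm, Nat.choose_eq_zero_of_lt (Nat.lt_succ_of_lt hm)]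


/-- For a strongly reducing polynomial action `T` with generator
`G`: all diagonal eigenvalues `λ_n` (from the reducing characterisation) are
zero, `deg (T_h p - p) < deg p` for nonconstant `p`, and the exponential series
terminates: `T_h p = Σ_{k ≤ n} (h^k/k!) G^k p` for `p ∈ P_n`, `h ≥ 0`. -/
theorem stmt13 {𝕜 E : Type*} [RCLike 𝕜]
    (deg : (E → 𝕜) → ℕ)
    (T : ℝ → Module.End 𝕜 (E → 𝕜))
    (Pr : ℕ → Module.End 𝕜 (E → 𝕜))
    (G : Module.End 𝕜 (E → 𝕜))
    (lam : ℕ → 𝕜)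
    (hadd : ∀ p q : E → 𝕜, deg (p + q) ≤ max (deg p) (deg q))
    (hsmul : ∀ (c : 𝕜) (p : E → 𝕜), c ≠ 0 → deg (c • p) = deg p)
    (hTdeg : ∀ h : ℝ, 0 ≤ h → ∀ p, deg (T h p) ≤ deg p)
    (hT0 : T 0 = 1)
    (hTsem : ∀ h k : ℝ, 0 ≤ h → 0 ≤ k → T h * T k = T (h + k))
    (hTcont : ∀ (p : E → 𝕜) (x : E) (h₀ : ℝ), 0 ≤ h₀ →
      Tendsto (fun h : ℝ => (T h p) x) (nhdsWithin h₀ (Set.Ici h₀))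
        (nhds ((T h₀ p) x)))
    (hconst : ∀ h : ℝ, 0 ≤ h → ∀ p : E → 𝕜, deg p = 0 → T h p = p)
    (hstrong : ∃ c : 𝕜, ∀ (p : E → 𝕜) (h : ℝ), 0 ≤ h →
      deg (T h p - c • p) < max 1 (deg p))
    (hPrrange : ∀ n p, deg (Pr n p) ≤ n)
    (hPrker : ∀ (n : ℕ) (p : E → 𝕜), deg p ≤ n → ∀ l, n < l → Pr l p = 0)
    (hPridem : ∀ n, Pr n * Pr n = Pr n)
    (hProrth : ∀ l n : ℕ, l ≠ n → Pr l * Pr n = 0)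
    (hsum : ∀ p : E → 𝕜, p = ∑ n ∈ Finset.range (deg p + 1), Pr n p)
    (hG : ∀ (p : E → 𝕜) (x : E),
      Tendsto (fun h : ℝ => h⁻¹ • ((T h p) x - p x))
        (nhdsWithin 0 (Set.Ioi 0)) (nhds ((G p) x)))
    (hlam : ∀ (n : ℕ) (f : E → 𝕜), Pr n f = f → ∀ h : ℝ, 0 ≤ h →
      Pr n (T h f) = NormedSpace.exp (algebraMap ℝ 𝕜 h * lam n) • f) :
    (∀ n : ℕ, (∃ f : E → 𝕜, Pr n f = f ∧ f ≠ 0) → lam n = 0) ∧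
    (∀ p : E → 𝕜, deg p ≠ 0 → ∀ h : ℝ, 0 ≤ h → deg (T h p - p) < deg p) ∧
    (∀ (n : ℕ) (p : E → 𝕜), deg p ≤ n → ∀ h : ℝ, 0 ≤ h →
      T h p = ∑ k ∈ Finset.range (n + 1),
        ((algebraMap ℝ 𝕜 h) ^ k / (Nat.factorial k : 𝕜)) • (G ^ k) p) := by
  obtain ⟨c, hc⟩ := hstrong
  have hPne : ∀ f : E → 𝕜, f ≠ 0 → ∃ x, f x ≠ 0 := by
    intro f hf
    by_contra hx
    push_neg at hx
    exact hf (funext fun x => hx x)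
  have hdegf : ∀ (n : ℕ) (f : E → 𝕜), Pr n f = f → f ≠ 0 → deg f = n := by
    intro n f hPf hf
    have h1 : deg f ≤ n := by conv_lhs => rw [← hPf]
                              exact hPrrange n f
    by_contra hne
    have h2 : deg f < n := by omega
    have := hPrker (deg f) f le_rfl n h2
    rw [hPf] at this
    exact hf this
  -- key : eigenvalue relation for n ≥ 1
  have key : ∀ (n : ℕ) (f : E → 𝕜), Pr n f = f → f ≠ 0 → 1 ≤ n → ∀ h : ℝ, 0 ≤ h →
      NormedSpace.exp (algebraMap ℝ 𝕜 h * lam n) = c := by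
    intro n f hPf hf hn h hh
    have hdf : deg f = n := hdegf n f hPf hf
    have h1 : deg (T h f - c • f) < n := by
      have := hc f h hh
      rwa [hdf, max_eq_right hn] at this
    have h2 : Pr n (T h f - c • f) = 0 := hPrker (n-1) _ (by omega) n (by omega)
    rw [map_sub, map_smul, hPf, sub_eq_zero] at h2
    rw [hlam n f hPf h hh] at h2
    obtain ⟨x, hx⟩ := hPne f hf
    have h3 := congrFun h2 x
    simp only [Pi.smul_apply, smul_eq_mul] at h3
    exact mul_right_cancel₀ hx h3
  have hc1 : ∀ (n : ℕ) (f : E → 𝕜), Pr n f = f → f ≠ 0 → 1 ≤ n → c = 1 := by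
    intro n f hPf hf hn
    have := key n f hPf hf hn 0 le_rfl
    rw [map_zero, zero_mul, NormedSpace.exp_zero] at this
    exact this.symm
  -- part 2
  have hsumdeg : ∀ (N : ℕ) (q : ℕ → E → 𝕜) (b : ℕ), (∀ k, k < N → deg (q k) ≤ b) → 1 ≤ N →
      deg (∑ k ∈ Finset.range N, q k) ≤ b := by
    intro N
    induction N with
    | zero => omega
    | succ N ih =>
      intro q b hq _
      rcases Nat.eq_zero_or_pos N with h0 | h0
      · subst h0
        simpa using hq 0 (by omega)
      · rw [Finset.sum_range_succ]
        exact le_trans (hadd _ _)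
          (max_le (ih q b (fun k hk => hq k (by omega)) h0) (hq N (by omega)))
  have part2 : ∀ p : E → 𝕜, deg p ≠ 0 → ∀ h : ℝ, 0 ≤ h → deg (T h p - p) < deg p := by
    intro p hp h hh
    have hn : 1 ≤ deg p := Nat.one_le_iff_ne_zero.mpr hp
    have hfne : Pr (deg p) p ≠ 0 := by
      intro h0
      have hs := hsum p
      rw [Finset.sum_range_succ, h0, add_zero] at hs
      have hdle : deg p ≤ deg p - 1 := by
        calc deg p = deg (∑ k ∈ Finset.range (deg p), Pr k p) := by rw [← hs]
          _ ≤ deg p - 1 := hsumdeg _ _ _ (fun k hk => le_trans (hPrrange k p) (by omega)) hn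
      omega
    have hPf : Pr (deg p) (Pr (deg p) p) = Pr (deg p) p := by
      have := congrArg (fun A : Module.End 𝕜 (E → 𝕜) => A p) (hPridem (deg p))
      simpa [Module.End.mul_apply] using this
    have hcone : c = 1 := hc1 (deg p) (Pr (deg p) p) hPf hfne hn
    have := hc p h hh
    rwa [hcone, one_smul, max_eq_right hn] at this
  refine ⟨?_, part2, ?_⟩
  · -- part 1
    rintro n ⟨f, hPf, hf⟩
    rcases Nat.eq_zero_or_pos n with h0 | h0
    · subst h0
      apply stmt13_exp_aux
      intro h hh
      have hdf : deg f = 0 := hdegf 0 f hPf hf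
      have h1 := hlam 0 f hPf h hh
      rw [hconst h hh f hdf, hPf] at h1
      obtain ⟨x, hx⟩ := hPne f hf
      have h2 := congrFun h1 x
      simp only [Pi.smul_apply, smul_eq_mul] at h2
      exact (mul_right_cancel₀ hx (by rw [← h2, one_mul])).symm
    · apply stmt13_exp_aux
      intro h hh
      rw [key n f hPf hf h0 h hh]
      exact hc1 n f hPf hf h0
  · intro n p hpn
    have hσcont : Continuous (fun t : ℝ => algebraMap ℝ 𝕜 t) := by
      simp only [Algebra.algebraMap_eq_smul_one]
      exact continuous_id.smul continuous_const
    have hfacne : ∀ k : ℕ, (Nat.factorial k : 𝕜) ≠ 0 :=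
      fun k => Nat.cast_ne_zero.mpr (Nat.factorial_ne_zero k)
    -- nilpotency of T s - 1
    have hnil : ∀ (m : ℕ) (q : E → 𝕜), deg q ≤ m → ∀ s : ℝ, 0 ≤ s → ((T s - 1) ^ (m+1)) q = 0 := by
      intro m
      induction m with
      | zero =>
        intro q hq s hs
        simp [pow_one, LinearMap.sub_apply, Module.End.one_apply,
          hconst s hs q (Nat.le_zero.mp hq)]
      | succ m ih =>
        intro q hq s hs
        rw [pow_succ, Module.End.mul_apply]
        by_cases hq0 : deg q = 0
        · rw [show (T s - 1) q = 0 from by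
            simp [LinearMap.sub_apply, Module.End.one_apply, hconst s hs q hq0]]
          simp
        · apply ih _ _ s hs
          have h1 : deg ((T s - 1) q) < deg q := by
            have := part2 q hq0 s hs
            simpa [LinearMap.sub_apply, Module.End.one_apply] using this
          omega
    have hpowT : ∀ s : ℝ, 0 ≤ s → ∀ m : ℕ, (T s) ^ m = T ((m:ℝ) * s) := by
      intro s hs m
      induction m with
      | zero => simp [hT0]
      | succ m ih =>
        rw [pow_succ, ih, hTsem _ s (by positivity) hs]
        congr 1
        push_cast
        ring
    have hNzero : ∀ s : ℝ, 0 ≤ s → ∀ k, n < k → ((T s - 1) ^ k) p = 0 := by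
      intro s hs k hk
      rw [show (T s - 1)^k = (T s - 1)^(k - (n+1)) * (T s - 1)^(n+1) from by
          rw [← pow_add]; congr 1; omega,
        Module.End.mul_apply, hnil n p hpn s hs, map_zero]
    have hbin : ∀ s : ℝ, 0 ≤ s → ∀ m : ℕ, T ((m:ℝ) * s) p
        = ∑ k ∈ Finset.range (n+1), ((m.choose k : 𝕜)) • (((T s - 1) ^ k) p) := by
      intro s hs m
      rw [← hpowT s hs m]
      have h2 : (T s) ^ m = ∑ k ∈ Finset.range (m+1),
          (T s - 1)^k * 1^(m-k) * ((m.choose k : ℕ) : Module.End 𝕜 (E → 𝕜)) := by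
        conv_lhs => rw [show T s = (T s - 1) + 1 from (sub_add_cancel _ _).symm]
        exact Commute.add_pow (Commute.one_right _) m
      rw [h2, LinearMap.sum_apply]
      have h3 : ∀ k, ((T s - 1)^k * 1^(m-k) * ((m.choose k : ℕ) : Module.End 𝕜 (E → 𝕜))) p
          = ((m.choose k : 𝕜)) • (((T s - 1)^k) p) := by
        intro k
        rw [one_pow, mul_one, Module.End.mul_apply, Module.End.natCast_apply,
          ← Nat.cast_smul_eq_nsmul 𝕜, map_smul]
      simp only [h3]
      have e1 : Finset.range (m+1) ⊆ Finset.range (max m n + 1) :=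
        Finset.range_subset_range.mpr (by omega)
      have e2 : Finset.range (n+1) ⊆ Finset.range (max m n + 1) :=
        Finset.range_subset_range.mpr (by omega)
      calc ∑ k ∈ Finset.range (m+1), ((m.choose k:𝕜)) • (((T s - 1)^k) p)
          = ∑ k ∈ Finset.range (max m n + 1), ((m.choose k:𝕜)) • (((T s - 1)^k) p) :=
            Finset.sum_subset e1 (fun k _ hk => by
              have hmk : m < k := by
                by_contra hcon
                exact hk (Finset.mem_range.mpr (by omega))
              simp [Nat.choose_eq_zero_of_lt hmk])
        _ = ∑ k ∈ Finset.range (n+1), ((m.choose k:𝕜)) • (((T s - 1)^k) p) :=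
            (Finset.sum_subset e2 (fun k _ hk => by
              have hnk : n < k := by
                by_contra hcon
                exact hk (Finset.mem_range.mpr (by omega))
              simp [hNzero s hs k hnk])).symm
    -- the interpolation polynomials
    set B : ℕ → Polynomial 𝕜 := fun k => Polynomial.C ((Nat.factorial k : 𝕜)⁻¹)
        * ∏ i ∈ Finset.range k, (Polynomial.X - Polynomial.C (i:𝕜)) with hBdef
    have hBeval : ∀ (k m : ℕ), (B k).eval (m:𝕜) = (m.choose k : 𝕜) := by
      intro k m
      simp only [hBdef, Polynomial.eval_mul, Polynomial.eval_C, Polynomial.eval_prod,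
        Polynomial.eval_sub, Polynomial.eval_X]
      rw [stmt13_descfac, ← mul_assoc, inv_mul_cancel₀ (hfacne k), one_mul]
    have hBdeg : ∀ k, (B k).natDegree ≤ k := by
      intro k
      have h1 : ∀ i ∈ Finset.range k, (Polynomial.X - Polynomial.C (i:𝕜)).natDegree ≤ 1 :=
        fun i _ => Polynomial.natDegree_X_sub_C_le _
      refine le_trans (Polynomial.natDegree_C_mul_le _ _)
        (le_trans (Polynomial.natDegree_prod_le _ _)
          (le_trans (Finset.sum_le_sum h1) (by simp)))
    set g : ℕ → E → 𝕜 := fun j x =>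
      ∑ k ∈ Finset.range (n+1), (B k).coeff j * (((T 1 - 1)^k) p) x with hgdef
    -- the representation
    have hrep : ∀ t : ℝ, 0 ≤ t → ∀ x : E,
        (T t p) x = ∑ j ∈ Finset.range (n+1), (algebraMap ℝ 𝕜 t)^j * g j x := by
      intro t ht x
      set a : ℝ → ℕ → 𝕜 := fun s k => (((T s - 1)^k) p) x with hadef
      set Q : ℝ → Polynomial 𝕜 :=
        fun s => ∑ k ∈ Finset.range (n+1), Polynomial.C (a s k) * B k with hQdef
      have hQeval : ∀ s : ℝ, 0 ≤ s → ∀ m : ℕ, (Q s).eval (m:𝕜) = (T ((m:ℝ) * s) p) x := by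
        intro s hs m
        rw [hbin s hs m, hQdef]
        simp only [Polynomial.eval_finset_sum, Polynomial.eval_mul, Polynomial.eval_C, hBeval]
        rw [Finset.sum_apply]
        exact Finset.sum_congr rfl (fun k _ => by
          simp [hadef, Pi.smul_apply, smul_eq_mul, mul_comm])
      have hQdouble : ∀ s : ℝ, 0 ≤ s → ∀ t' : 𝕜, (Q (2*s)).eval t' = (Q s).eval (2*t') := by
        intro s hs t'
        have hcomp : Q (2*s) = (Q s).comp (Polynomial.C 2 * Polynomial.X) := by
          apply stmt13_polyeq
          intro m
          rw [Polynomial.eval_comp]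
          simp only [Polynomial.eval_mul, Polynomial.eval_C, Polynomial.eval_X]
          rw [hQeval (2*s) (by positivity) m,
            show (2:𝕜) * (m:𝕜) = ((2*m : ℕ):𝕜) from by push_cast; ring,
            hQeval s hs (2*m)]
          congr 1
          push_cast
          ring
        rw [hcomp, Polynomial.eval_comp]
        simp
      have hQdy : ∀ (j : ℕ) (t' : 𝕜), (Q (((2:ℝ)^j)⁻¹)).eval t' = (Q 1).eval (t' / 2^j) := by
        intro j
        induction j with
        | zero => intro t'; simp
        | succ j ih =>
          intro t'
          have h2 := hQdouble (((2:ℝ)^(j+1))⁻¹) (by positivity) (t'/2)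
          rw [show (2:ℝ) * ((2:ℝ)^(j+1))⁻¹ = ((2:ℝ)^j)⁻¹ from by
              field_simp
              ring] at h2
          rw [show (2:𝕜) * (t'/2) = t' from by ring] at h2
          rw [← h2, ih (t'/2)]
          congr 1
          rw [div_div, pow_succ, mul_comm]
      have hgrid : ∀ (m j : ℕ), (T ((m:ℝ) / 2^j) p) x = (Q 1).eval ((m:𝕜) / 2^j) := by
        intro m j
        have h1 := hQeval (((2:ℝ)^j)⁻¹) (by positivity) m
        rw [hQdy j ((m:𝕜))] at h1
        rw [div_eq_mul_inv, ← h1]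
      have hd1 : ∀ j : ℕ, t ≤ ((⌈t * 2^j⌉₊ : ℕ):ℝ)/2^j := by
        intro j
        rw [le_div_iff₀ (by positivity)]
        exact Nat.le_ceil _
      have hd2 : ∀ j : ℕ, ((⌈t * 2^j⌉₊ : ℕ):ℝ)/2^j ≤ t + ((2:ℝ)^j)⁻¹ := by
        intro j
        rw [div_le_iff₀ (by positivity)]
        calc ((⌈t * 2^j⌉₊ : ℕ):ℝ) ≤ t * 2^j + 1 := (Nat.ceil_lt_add_one (by positivity)).le
          _ = (t + ((2:ℝ)^j)⁻¹) * 2^j := by field_simp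
      have htendd : Tendsto (fun j : ℕ => ((⌈t * 2^j⌉₊ : ℕ):ℝ)/2^j) atTop (nhds t) := by
        have hup : Tendsto (fun j : ℕ => t + ((2:ℝ)^j)⁻¹) atTop (nhds t) := by
          have h0 : Tendsto (fun j : ℕ => ((2:ℝ)^j)⁻¹) atTop (nhds 0) := by
            have := tendsto_pow_atTop_nhds_zero_of_lt_one
              (by norm_num : (0:ℝ) ≤ 1/2) (by norm_num : (1:ℝ)/2 < 1)
            simpa [one_div, inv_pow] using this
          simpa using tendsto_const_nhds.add h0
        exact tendsto_of_tendsto_of_tendsto_of_le_of_le tendsto_const_nhds hup hd1 hd2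
      have htendW : Tendsto (fun j : ℕ => ((⌈t * 2^j⌉₊ : ℕ):ℝ)/2^j) atTop
          (nhdsWithin t (Set.Ici t)) :=
        tendsto_nhdsWithin_of_tendsto_nhds_of_eventually_within _ htendd
          (Eventually.of_forall hd1)
      have lim1 : Tendsto (fun j : ℕ => (T (((⌈t * 2^j⌉₊ : ℕ):ℝ)/2^j) p) x) atTop
          (nhds ((T t p) x)) := (hTcont p x t ht).comp htendW
      have lim2 : Tendsto (fun j : ℕ => (T (((⌈t * 2^j⌉₊ : ℕ):ℝ)/2^j) p) x) atTop
          (nhds ((Q 1).eval (algebraMap ℝ 𝕜 t))) := by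
        have heq : (fun j : ℕ => (T (((⌈t * 2^j⌉₊ : ℕ):ℝ)/2^j) p) x)
            = fun j : ℕ => (Q 1).eval (algebraMap ℝ 𝕜 (((⌈t * 2^j⌉₊ : ℕ):ℝ)/2^j)) := by
          funext j
          rw [hgrid]
          congr 1
          rw [map_div₀, map_natCast, map_pow, map_ofNat]
        rw [heq]
        exact ((Polynomial.continuous (Q 1)).tendsto _).comp ((hσcont.tendsto t).comp htendd)
      have hQx := tendsto_nhds_unique lim1 lim2
      have hQdeg : (Q 1).natDegree ≤ n := by
        apply Polynomial.natDegree_sum_le_of_forall_le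
        intro k hk
        exact le_trans (Polynomial.natDegree_C_mul_le _ _)
          (le_trans (hBdeg k) (by have := Finset.mem_range.mp hk; omega))
      rw [hQx, Polynomial.eval_eq_sum_range' (lt_of_le_of_lt hQdeg (Nat.lt_succ_self n))]
      apply Finset.sum_congr rfl
      intro j _
      rw [show (Q 1).coeff j = ∑ k ∈ Finset.range (n+1), a 1 k * (B k).coeff j from by
        simp [hQdef, Polynomial.finset_sum_coeff, Polynomial.coeff_C_mul]]
      rw [mul_comm]
      congr 1
      rw [hgdef]
      exact Finset.sum_congr rfl (fun k _ => by rw [hadef]; ring)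
    have hrepF : ∀ t : ℝ, 0 ≤ t →
        T t p = ∑ j ∈ Finset.range (n+1), (algebraMap ℝ 𝕜 t)^j • g j := by
      intro t ht
      funext x
      rw [hrep t ht x, Finset.sum_apply]
      exact Finset.sum_congr rfl (fun j _ => by simp [Pi.smul_apply, smul_eq_mul])
    have hgzero : ∀ j, n < j → g j = 0 := by
      intro j hj
      funext x
      rw [hgdef]
      simp only [Pi.zero_apply]
      apply Finset.sum_eq_zero
      intro k hk
      have hc0 : (B k).coeff j = 0 := Polynomial.coeff_eq_zero_of_natDegree_lt
        (lt_of_le_of_lt (hBdeg k) (by have := Finset.mem_range.mp hk; omega))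
      simp [hc0]
    have hg0 : g 0 = p := by
      have h0 := hrepF 0 le_rfl
      rw [hT0, map_zero] at h0
      rw [Finset.sum_eq_single 0 (fun j _ hj => by simp [zero_pow hj])
        (fun hmem => absurd (Finset.mem_range.mpr (by omega)) hmem)] at h0
      simpa [Module.End.one_apply] using h0.symm
    -- action of T on the coefficient functions
    have hTg : ∀ s : ℝ, 0 ≤ s → ∀ i, T s (g i)
        = ∑ j ∈ Finset.range (n+1),
            ((j.choose i : 𝕜) * (algebraMap ℝ 𝕜 s)^(j-i)) • g j := by
      intro s hs i
      set w : ℕ → E → 𝕜 := fun j => ∑ l ∈ Finset.range (n+1),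
        ((l.choose j : 𝕜) * (algebraMap ℝ 𝕜 s)^(l-j)) • g l with hwdef
      show T s (g i) = w i
      by_cases hi : n < i
      · rw [hgzero i hi, map_zero, hwdef]
        symm
        apply Finset.sum_eq_zero
        intro l hl
        have : l < i := by have := Finset.mem_range.mp hl; omega
        simp [Nat.choose_eq_zero_of_lt this]
      push_neg at hi
      funext x
      have hmain : ∀ m : ℕ, ∑ j ∈ Finset.range (n+1),
          ((T s (g j)) x - w j x) * ((m:𝕜))^j = 0 := by
        intro m
        have hA : T s (T ((m:ℕ):ℝ) p) = T (((m:ℕ):ℝ) + s) p := by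
          have h1 := congrArg (fun A : Module.End 𝕜 (E → 𝕜) => A p)
            (hTsem s ((m:ℕ):ℝ) hs (by positivity))
          simp only [Module.End.mul_apply] at h1
          rw [h1, show s + ((m:ℕ):ℝ) = ((m:ℕ):ℝ) + s from by ring]
        have hL : T s (T ((m:ℕ):ℝ) p)
            = ∑ j ∈ Finset.range (n+1), ((m:𝕜))^j • T s (g j) := by
          rw [hrepF ((m:ℕ):ℝ) (by positivity), map_sum]
          apply Finset.sum_congr rfl
          intro j _
          rw [map_smul, map_natCast (algebraMap ℝ 𝕜) m]
        have hR : T (((m:ℕ):ℝ) + s) p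
            = ∑ j ∈ Finset.range (n+1), ((m:𝕜))^j • w j := by
          rw [hrepF (((m:ℕ):ℝ) + s) (by positivity), map_add, map_natCast (algebraMap ℝ 𝕜) m]
          calc ∑ l ∈ Finset.range (n+1), ((m:𝕜) + algebraMap ℝ 𝕜 s)^l • g l
              = ∑ l ∈ Finset.range (n+1), ∑ j ∈ Finset.range (n+1),
                  (((m:𝕜))^j * ((l.choose j : 𝕜) * (algebraMap ℝ 𝕜 s)^(l-j))) • g l := by
                apply Finset.sum_congr rfl
                intro l hl
                have hl' : l < n+1 := Finset.mem_range.mp hl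
                rw [add_pow, Finset.sum_smul,
                  Finset.sum_subset (Finset.range_subset_range.mpr (by omega : l+1 ≤ n+1))
                    (fun j _ hj => by
                      have hlj : l < j := by
                        by_contra hcon
                        exact hj (Finset.mem_range.mpr (by omega))
                      simp [Nat.choose_eq_zero_of_lt hlj])]
                apply Finset.sum_congr rfl
                intro j _
                congr 1
                ring
            _ = ∑ j ∈ Finset.range (n+1), ((m:𝕜))^j • w j := by
                rw [Finset.sum_comm]
                apply Finset.sum_congr rfl
                intro j _
                rw [hwdef]
                simp only
                rw [Finset.smul_sum]
                apply Finset.sum_congr rfl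
                intro l _
                rw [smul_smul]
        have hcf := congrFun (hL.symm.trans (hA.trans hR)) x
        simp only [Finset.sum_apply, Pi.smul_apply, smul_eq_mul] at hcf
        calc ∑ j ∈ Finset.range (n+1), ((T s (g j)) x - w j x) * ((m:𝕜))^j
            = ∑ j ∈ Finset.range (n+1),
                (((m:𝕜))^j * (T s (g j)) x - ((m:𝕜))^j * w j x) := by
              apply Finset.sum_congr rfl
              intro j _
              ring
          _ = (∑ j ∈ Finset.range (n+1), ((m:𝕜))^j * (T s (g j)) x)
              - ∑ j ∈ Finset.range (n+1), ((m:𝕜))^j * w j x := Finset.sum_sub_distrib _ _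
          _ = 0 := by rw [hcf, sub_self]
      have := stmt13_coeffs (n+1) (fun j => (T s (g j)) x - w j x) hmain i (by omega)
      exact sub_eq_zero.mp (by simpa using this)
    -- the generator acts as shift on coefficients
    have hGg : ∀ i : ℕ, G (g i) = (((i+1 : ℕ)) : 𝕜) • g (i+1) := by
      intro i
      by_cases hi : n < i
      · rw [hgzero i hi, hgzero (i+1) (by omega), map_zero, smul_zero]
      push_neg at hi
      funext x
      have hσ0 : Tendsto (fun h : ℝ => algebraMap ℝ 𝕜 h) (nhdsWithin 0 (Set.Ioi 0)) (nhds 0) := by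
        have h1 := hσcont.tendsto 0
        rw [map_zero] at h1
        exact h1.mono_left nhdsWithin_le_nhds
      have heq : (fun h : ℝ => (fun z : 𝕜 => ∑ d ∈ Finset.range (n - i),
            (((i+1+d).choose i : 𝕜) * z^d) * g (i+1+d) x) (algebraMap ℝ 𝕜 h))
          =ᶠ[nhdsWithin (0:ℝ) (Set.Ioi 0)]
            (fun h : ℝ => h⁻¹ • ((T h (g i)) x - g i x)) := by
        filter_upwards [self_mem_nhdsWithin] with h hh
        have hh0 : (0:ℝ) < h := hh
        have hσne : algebraMap ℝ 𝕜 h ≠ 0 := by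
          intro h0
          exact hh0.ne' ((algebraMap ℝ 𝕜).injective (by rw [h0, map_zero]))
        have hsplit : T h (g i) = g i + ∑ j ∈ Finset.Ico (i+1) (n+1),
            ((j.choose i:𝕜) * (algebraMap ℝ 𝕜 h)^(j-i)) • g j := by
          rw [hTg h hh0.le i]
          rw [← Finset.sum_range_add_sum_Ico _ (by omega : i+1 ≤ n+1)]
          congr 1
          rw [Finset.sum_range_succ, Finset.sum_eq_zero (fun j hj => by
            simp [Nat.choose_eq_zero_of_lt (Finset.mem_range.mp hj)]), zero_add]
          simp
        rw [hsplit]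
        simp only [Pi.add_apply, add_sub_cancel_left, Finset.sum_apply]
        rw [Finset.smul_sum, Finset.sum_Ico_eq_sum_range,
          show n+1 - (i+1) = n - i from by omega]
        symm
        apply Finset.sum_congr rfl
        intro d _
        rw [Pi.smul_apply, smul_eq_mul, show i+1+d - i = d+1 from by omega,
          Algebra.smul_def, map_inv₀]
        field_simp
        ring
      have hcont2 : Continuous (fun z : 𝕜 => ∑ d ∈ Finset.range (n - i),
          (((i+1+d).choose i : 𝕜) * z^d) * g (i+1+d) x) := by
        apply continuous_finset_sum
        intro d _
        exact (continuous_const.mul (continuous_pow d)).mul continuous_const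
      have lim2' := (hcont2.tendsto 0).comp hσ0
      simp only [Function.comp_def] at lim2'
      have hval : (∑ d ∈ Finset.range (n - i),
          (((i+1+d).choose i : 𝕜) * (0:𝕜)^d) * g (i+1+d) x)
          = ((i+1:ℕ) : 𝕜) * g (i+1) x := by
        rcases Nat.eq_zero_or_pos (n - i) with h0 | h0
        · rw [h0, Finset.range_zero, Finset.sum_empty, hgzero (i+1) (by omega)]
          simp
        · rw [Finset.sum_eq_single 0 (fun d _ hd => by simp [zero_pow hd])
            (fun hmem => absurd (Finset.mem_range.mpr (by omega)) hmem)]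
          simp [Nat.choose_succ_self_right]
      rw [hval] at lim2'
      have lim2 := lim2'.congr' heq
      rw [Pi.smul_apply, smul_eq_mul]
      exact tendsto_nhds_unique (hG (g i) x) lim2
    have hGk : ∀ k : ℕ, (G^k) p = ((Nat.factorial k : ℕ) : 𝕜) • g k := by
      intro k
      induction k with
      | zero => simp [hg0]
      | succ k ih =>
        rw [pow_succ', Module.End.mul_apply, ih, map_smul, hGg k, smul_smul]
        congr 1
        rw [Nat.factorial_succ]
        push_cast
        ring
    intro h hh
    rw [hrepF h hh]
    apply Finset.sum_congr rfl
    intro k _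
    rw [hGk k, smul_smul, div_mul_cancel₀ _ (hfacne k)]
end

section
/- Suppose a strongly continuous semigroup T̄ on the Banach space P̄₁ = P₀ ⊕ L̄ has upper-triangular form with blocks (I, T̄_h^{(0)}; 0, T̄_h^{(1)}) (i.e., T̄_h fixes constants and maps P̄₁ into itself respecting the grading). Then the domain D̄ of the generator Ḡ decomposes as D̄ = P₀ ⊕ (D̄ ∩ L̄), one has D̄ ∩ L̄ ⊆ dom(Ḡ^{(1)}) where Ḡ^{(1)} is the generator of the semigroup T̄^{(1)} on L̄, and for f = c + ℓ with c ∈ P₀ and ℓ ∈ D̄ ∩ L̄ one has Ḡ f = Ḡ^{(0)} ℓ + Ḡ^{(1)} ℓ. -/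
open Filter

/-- For a strongly continuous semigroup `T̄` on `P̄₁ = P₀ ⊕ L̄`
with upper-triangular block form (it fixes the constants `P₀ = range P0` and
respects the grading), the domain `D̄` of its generator decomposes as
`D̄ = P₀ ⊕ (D̄ ∩ L̄)`, elements of `D̄ ∩ L̄` lie in the domain of the generator
of `T̄^{(1)}` (together with the existence of `Ḡ^{(0)}`), and for `f = c + ℓ`
one has `Ḡ f = Ḡ^{(0)} ℓ + Ḡ^{(1)} ℓ`. -/
theorem stmt18 {𝕜 B : Type*} [RCLike 𝕜] [NormedAddCommGroup B]
    [NormedSpace 𝕜 B] [NormedSpace ℝ B] [IsScalarTower ℝ 𝕜 B] [CompleteSpace B]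
    (T : ℝ → B →L[𝕜] B)
    (P0 P1 : B →L[𝕜] B)
    (hsum : ∀ f, P0 f + P1 f = f)
    (h00 : ∀ f, P0 (P0 f) = P0 f) (h11 : ∀ f, P1 (P1 f) = P1 f)
    (h01 : ∀ f, P0 (P1 f) = 0) (h10 : ∀ f, P1 (P0 f) = 0)
    (hT0 : T 0 = ContinuousLinearMap.id 𝕜 B)
    (hTsem : ∀ h k : ℝ, 0 ≤ h → 0 ≤ k → (T h).comp (T k) = T (h + k))
    (hTcont : ∀ f : B, Continuous fun h : ℝ => T h f)
    (hconstfix : ∀ h : ℝ, 0 ≤ h → ∀ f : B, T h (P0 f) = P0 f)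
    (hlower : ∀ h : ℝ, 0 ≤ h → ∀ f : B, P1 (T h (P0 f)) = 0) :
    (∀ f : B,
      (∃ g : B, Tendsto (fun h : ℝ => h⁻¹ • (T h f - f))
          (nhdsWithin 0 (Set.Ioi 0)) (nhds g)) ↔
      (∃ g : B, Tendsto (fun h : ℝ => h⁻¹ • (T h (P1 f) - P1 f))
          (nhdsWithin 0 (Set.Ioi 0)) (nhds g))) ∧
    (∀ (ℓ g : B), P1 ℓ = ℓ →
      Tendsto (fun h : ℝ => h⁻¹ • (T h ℓ - ℓ))
        (nhdsWithin 0 (Set.Ioi 0)) (nhds g) →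
      Tendsto (fun h : ℝ => h⁻¹ • (P1 (T h ℓ) - ℓ))
        (nhdsWithin 0 (Set.Ioi 0)) (nhds (P1 g)) ∧
      Tendsto (fun h : ℝ => h⁻¹ • (P0 (T h ℓ) : B))
        (nhdsWithin 0 (Set.Ioi 0)) (nhds (P0 g))) ∧
    (∀ (c ℓ g : B), P0 c = c → P1 ℓ = ℓ →
      Tendsto (fun h : ℝ => h⁻¹ • (T h ℓ - ℓ))
        (nhdsWithin 0 (Set.Ioi 0)) (nhds g) →
      Tendsto (fun h : ℝ => h⁻¹ • (T h (c + ℓ) - (c + ℓ)))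
        (nhdsWithin 0 (Set.Ioi 0)) (nhds (P0 g + P1 g))) := by
  have key : ∀ h : ℝ, 0 ≤ h → ∀ f : B, T h f - f = T h (P1 f) - P1 f := by
    intro h hh f
    calc T h f - f = T h (P0 f + P1 f) - (P0 f + P1 f) := by rw [hsum]
    _ = T h (P1 f) - P1 f := by rw [map_add, hconstfix h hh f]; abel
  refine ⟨?_, ?_, ?_⟩
  · intro f
    have heq : (fun h : ℝ => h⁻¹ • (T h f - f)) =ᶠ[nhdsWithin 0 (Set.Ioi 0)]
        (fun h : ℝ => h⁻¹ • (T h (P1 f) - P1 f)) := by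
      filter_upwards [self_mem_nhdsWithin] with h hh
      rw [key h hh.le f]
    exact ⟨fun ⟨g, hg⟩ => ⟨g, hg.congr' heq⟩, fun ⟨g, hg⟩ => ⟨g, hg.congr' heq.symm⟩⟩
  · intro ℓ g hℓ hg
    have h0ℓ : P0 ℓ = 0 := by rw [← hℓ, h01]
    constructor
    · have h1 := (P1.continuous.tendsto g).comp hg
      refine h1.congr fun h => ?_
      simp only [Function.comp, P1.map_smul_of_tower, map_sub, hℓ]
    · have h0 := (P0.continuous.tendsto g).comp hg
      refine h0.congr fun h => ?_
      simp only [Function.comp, P0.map_smul_of_tower, map_sub, h0ℓ, sub_zero]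
  · intro c ℓ g hc hℓ hg
    have heq : (fun h : ℝ => h⁻¹ • (T h ℓ - ℓ)) =ᶠ[nhdsWithin 0 (Set.Ioi 0)]
        (fun h : ℝ => h⁻¹ • (T h (c + ℓ) - (c + ℓ))) := by
      filter_upwards [self_mem_nhdsWithin] with h hh
      have hTc : T h c = c := by rw [← hc]; exact hconstfix h hh.le c
      congr 1
      rw [map_add, hTc]; abel
    rw [hsum g]
    exact hg.congr' heq
end
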